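/- For every integer n ≥ 2 there exists ε₀ > 0, depending only on n, with the following property. Let p ∈ ℝⁿ, let f be twice differentiable at p with negative semidefinite Hessian D²f(p) ≤ 0, and let W ∈ ℝⁿ with |W| ≤ ε₀ be such that ∂_i f(p) = W_i for all i = 2, …, n (i.e. ∇f(p) − W is parallel to e₁). Then Σ_{i,j=1}^n a_{ij}(∇f(p)) ∂_{ij}f(p) ≤ (1 − 1.1(n−1)|W|) · Σ_{i=1}^n a_{ii}(∇f(p)) ∂_{ii}f(p). -/

import Mathlib

open scoped BigOperators RealInnerProductSpace
open Metric Filter Topology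

set_option maxHeartbeats 1000000

noncomputable section

/-- The partial derivative `∂_i f` at `x`. -/
def pd (n : ℕ) (f : EuclideanSpace ℝ (Fin n) → ℝ) (i : Fin n)
    (x : EuclideanSpace ℝ (Fin n)) : ℝ :=
  fderiv ℝ f x (EuclideanSpace.single i 1)

/-- The second partial derivative `∂_{ij} f` at `x`. -/
def pd2 (n : ℕ) (f : EuclideanSpace ℝ (Fin n) → ℝ) (i j : Fin n)
    (x : EuclideanSpace ℝ (Fin n)) : ℝ :=
  pd n (pd n f i) j x

/-- The gradient vector `∇f(x)`. -/
def gradAt (n : ℕ) (f : EuclideanSpace ℝ (Fin n) → ℝ) (x : EuclideanSpace ℝ (Fin n)) :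
    EuclideanSpace ℝ (Fin n) :=
  (EuclideanSpace.equiv (Fin n) ℝ).symm fun i => pd n f i x

/-- The coefficient matrix `a_{ij}(q) = δ_{ij} − q_i q_j/(1+|q|²)` of the minimal graph
operator. -/
def amat (n : ℕ) (q : EuclideanSpace ℝ (Fin n)) (i j : Fin n) : ℝ :=
  (if i = j then (1:ℝ) else 0) - q i * q j / (1 + ‖q‖ ^ 2)

/-- AM–GM helper: `x ≤ A + B` whenever `x² ≤ 4AB` and `A, B ≥ 0`. -/
private lemma amg_aux (x A B : ℝ) (hA : 0 ≤ A) (hB : 0 ≤ B) (hx : x ^ 2 ≤ 4 * (A * B)) :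
    x ≤ A + B := by
  nlinarith [sq_nonneg (A - B), sq_nonneg (A + B - x)]

/-- For every `n ≥ 2` there is `ε₀ > 0` such that: if `f` is twice
differentiable at `p` with negative semidefinite Hessian and `W ∈ ℝⁿ` has `|W| ≤ ε₀` and
`∂_i f(p) = W_i` for `i = 2, …, n` (so `∇f(p) − W ∥ e₁`), then
`Σ_{i,j} a_{ij}(∇f(p)) ∂_{ij}f(p) ≤ (1 − 1.1(n−1)|W|) Σ_i a_{ii}(∇f(p)) ∂_{ii}f(p)`. -/
theorem stmt10 (n : ℕ) (hn : 2 ≤ n) :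
    ∃ ε₀ > (0:ℝ), ∀ (p : EuclideanSpace ℝ (Fin n)) (f : EuclideanSpace ℝ (Fin n) → ℝ)
      (W : EuclideanSpace ℝ (Fin n)),
      -- `f` is twice differentiable at `p`:
      (∀ᶠ y in 𝓝 p, DifferentiableAt ℝ f y) →
      DifferentiableAt ℝ (fderiv ℝ f) p →
      -- the Hessian of `f` at `p` is negative semidefinite:
      (∀ v : EuclideanSpace ℝ (Fin n), ∑ i, ∑ j, v i * v j * pd2 n f i j p ≤ 0) →
      ‖W‖ ≤ ε₀ →
      (∀ i : Fin n, (i : ℕ) ≠ 0 → pd n f i p = W i) →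
      ∑ i, ∑ j, amat n (gradAt n f p) i j * pd2 n f i j p
        ≤ (1 - 1.1 * ((n : ℝ) - 1) * ‖W‖)
            * ∑ i, amat n (gradAt n f p) i i * pd2 n f i i p := by
  refine ⟨1, one_pos, fun p f W _ _ hH hWn hW => ?_⟩
  set q : EuclideanSpace ℝ (Fin n) := gradAt n f p with hqdef
  set H : Fin n → Fin n → ℝ := fun i j => pd2 n f i j p with hHdef
  set a : Fin n → Fin n → ℝ := fun i j => amat n q i j with hadef
  have hWnn : (0:ℝ) ≤ ‖W‖ := norm_nonneg W
  -- basic norm facts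
  have hnormsq : ∀ z : EuclideanSpace ℝ (Fin n), ‖z‖ ^ 2 = ∑ i, z i ^ 2 := by
    intro z
    rw [EuclideanSpace.norm_eq, Real.sq_sqrt (by positivity)]
    simp [Real.norm_eq_abs, sq_abs]
  have hWk : ∀ k, W k ^ 2 ≤ ‖W‖ ^ 2 := by
    intro k
    rw [hnormsq]
    exact Finset.single_le_sum (f := fun i => W i ^ 2) (fun i _ => sq_nonneg _)
      (Finset.mem_univ k)
  have hqk : ∀ k, q k ^ 2 ≤ ‖q‖ ^ 2 := by
    intro k
    rw [hnormsq]
    exact Finset.single_le_sum (f := fun i => q i ^ 2) (fun i _ => sq_nonneg _)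
      (Finset.mem_univ k)
  have hqkl : ∀ k l, k ≠ l → q k ^ 2 + q l ^ 2 ≤ ‖q‖ ^ 2 := by
    intro k l hkl
    rw [hnormsq]
    have : ∑ i ∈ ({k, l} : Finset (Fin n)), q i ^ 2 ≤ ∑ i, q i ^ 2 :=
      Finset.sum_le_sum_of_subset_of_nonneg (Finset.subset_univ _)
        (fun i _ _ => sq_nonneg _)
    rwa [Finset.sum_pair hkl] at this
  have hs : (0:ℝ) < 1 + ‖q‖ ^ 2 := by positivity
  set s : ℝ := 1 + ‖q‖ ^ 2 with hsdef
  have hqW : ∀ k : Fin n, (k : ℕ) ≠ 0 → q k = W k := fun k hk => hW k hk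
  -- matrix entries
  have haij : ∀ i j, i ≠ j → a i j = -(q i * q j) / s := by
    intro i j hij
    simp only [hadef, amat, if_neg hij]
    ring
  have haii : ∀ i, a i i = (s - q i ^ 2) / s := by
    intro i
    simp only [hadef, amat, if_pos rfl, if_true]
    field_simp
    rw [hsdef]
    ring
  have hsub : ∀ i, (0:ℝ) ≤ s - q i ^ 2 := by
    intro i
    have := hqk i
    simp only [hsdef]
    nlinarith
  have haii_nn : ∀ i, 0 ≤ a i i := fun i => (haii i) ▸ div_nonneg (hsub i) hs.le
  -- diagonal of Hessian is nonpositive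
  have hdiag : ∀ i, H i i ≤ 0 := by
    intro i
    have := hH (EuclideanSpace.single i 1)
    simpa [EuclideanSpace.single_apply, ite_mul, mul_ite, Finset.sum_ite_eq,
      Finset.sum_ite_eq'] using this
  -- off-diagonal Hessian bound
  have hpair : ∀ i j, i ≠ j → (H i j + H j i) ^ 2 ≤ 4 * (H i i * H j j) := by
    intro i j hij
    have key : ∀ x : ℝ, 0 ≤ (-H i i) * (x * x) + (-(H i j + H j i)) * x + (-H j j) := by
      intro x
      have h2 := hH (EuclideanSpace.single i x + EuclideanSpace.single j 1)
      simp only [PiLp.add_apply, EuclideanSpace.single_apply, add_mul, mul_add, ite_mul,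
        mul_ite, zero_mul, mul_zero, Finset.sum_add_distrib, Finset.sum_ite_eq,
        Finset.sum_ite_eq', Finset.mem_univ, if_true, if_neg hij, if_neg (Ne.symm hij)] at h2
      nlinarith [h2]
    have hd := discrim_le_zero key
    rw [discrim] at hd
    nlinarith [hd]
  -- key coefficient bound: a_ij² ≤ ‖W‖² a_ii a_jj
  have hcoef : ∀ i j, i ≠ j → (a i j) ^ 2 ≤ ‖W‖ ^ 2 * (a i i * a j j) := by
    intro i j hij
    have hpoly : (q i * q j) ^ 2 ≤ ‖W‖ ^ 2 * ((s - q i ^ 2) * (s - q j ^ 2)) := by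
      have hsum := hqkl i j hij
      have hi1 : 1 ≤ s - q j ^ 2 := by
        have := hqk j; simp only [hsdef]; nlinarith
      have hj1 : 1 ≤ s - q i ^ 2 := by
        have := hqk i; simp only [hsdef]; nlinarith
      rcases eq_or_ne (i : ℕ) 0 with hi0 | hi0
      · -- then j ≠ 0
        have hj0 : (j : ℕ) ≠ 0 := by
          intro h; exact hij (Fin.ext (hi0.trans h.symm))
        have hqj : q j = W j := hqW j hj0
        have h1 : q j ^ 2 ≤ ‖W‖ ^ 2 := hqj ▸ hWk j
        have h2 : q i ^ 2 ≤ s - q j ^ 2 := by simp only [hsdef]; nlinarith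
        linarith [mul_le_mul_of_nonneg_right h2 (sq_nonneg (q j)),
          mul_le_mul_of_nonneg_left h1 (show (0:ℝ) ≤ s - q j ^ 2 by linarith),
          mul_le_mul_of_nonneg_right hj1
            (mul_nonneg (show (0:ℝ) ≤ s - q j ^ 2 by linarith) (sq_nonneg ‖W‖))]
      · have hqi : q i = W i := hqW i hi0
        have h1 : q i ^ 2 ≤ ‖W‖ ^ 2 := hqi ▸ hWk i
        rcases eq_or_ne (j : ℕ) 0 with hj0 | hj0
        · have h2 : q j ^ 2 ≤ s - q i ^ 2 := by simp only [hsdef]; nlinarith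
          linarith [mul_le_mul_of_nonneg_right h2 (sq_nonneg (q i)),
            mul_le_mul_of_nonneg_left h1 (show (0:ℝ) ≤ s - q i ^ 2 by linarith),
            mul_le_mul_of_nonneg_right hi1
              (mul_nonneg (show (0:ℝ) ≤ s - q i ^ 2 by linarith) (sq_nonneg ‖W‖))]
        · -- both nonzero: use ‖W‖ ≤ 1
          have hqj : q j = W j := hqW j hj0
          have h2 : q j ^ 2 ≤ ‖W‖ ^ 2 := hqj ▸ hWk j
          have hW1 : ‖W‖ ^ 2 ≤ 1 := by nlinarith [hWn, hWnn]
          have h3 : q i ^ 2 ≤ s - q i ^ 2 := by linarith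
          linarith [mul_le_mul_of_nonneg_right h3 (sq_nonneg (q j)),
            mul_le_mul_of_nonneg_left h2 (show (0:ℝ) ≤ s - q i ^ 2 by linarith),
            mul_le_mul_of_nonneg_right hi1
              (mul_nonneg (show (0:ℝ) ≤ s - q i ^ 2 by linarith) (sq_nonneg ‖W‖))]
    calc (a i j) ^ 2 = (q i * q j) ^ 2 / s ^ 2 := by
          rw [haij i j hij, div_pow, neg_sq]
      _ ≤ (‖W‖ ^ 2 * ((s - q i ^ 2) * (s - q j ^ 2))) / s ^ 2 :=
          (div_le_div_iff_of_pos_right (pow_pos hs 2)).mpr hpoly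
      _ = ‖W‖ ^ 2 * (a i i * a j j) := by
          rw [haii i, haii j, div_mul_div_comm, mul_div_assoc, pow_two s]
  -- per-pair bound on the off-diagonal terms
  set A : Fin n → ℝ := fun k => a k k * (-(H k k)) with hAdef
  have hA_nn : ∀ k, 0 ≤ A k := fun k =>
    mul_nonneg (haii_nn k) (by linarith [hdiag k])
  have hAmain : ∀ i j, i ≠ j →
      a i j * (H i j + H j i) ≤ ‖W‖ * A i + ‖W‖ * A j := by
    intro i j hij
    apply amg_aux _ _ _ (mul_nonneg hWnn (hA_nn i)) (mul_nonneg hWnn (hA_nn j))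
    have h1 := hcoef i j hij
    have h2 := hpair i j hij
    have h3 : 0 ≤ (H i j + H j i) ^ 2 := sq_nonneg _
    have h4 : 0 ≤ ‖W‖ ^ 2 * (a i i * a j j) :=
      mul_nonneg (sq_nonneg _) (mul_nonneg (haii_nn i) (haii_nn j))
    calc (a i j * (H i j + H j i)) ^ 2 = (a i j) ^ 2 * (H i j + H j i) ^ 2 := by ring
      _ ≤ (‖W‖ ^ 2 * (a i i * a j j)) * (4 * (H i i * H j j)) := by
          apply mul_le_mul h1 h2 h3 h4
      _ = 4 * ((‖W‖ * A i) * (‖W‖ * A j)) := by simp only [hAdef]; ring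
  -- sum manipulations
  have hsplit : ∀ g : Fin n → Fin n → ℝ,
      (∑ i, ∑ j, g i j) = (∑ i, g i i) + ∑ i, ∑ j ∈ Finset.univ.erase i, g i j := by
    intro g
    rw [← Finset.sum_add_distrib]
    refine Finset.sum_congr rfl fun i _ => ?_
    rw [Finset.add_sum_erase _ _ (Finset.mem_univ i)]
  set D : ℝ := ∑ k, A k with hDdef
  have hD_nn : 0 ≤ D := Finset.sum_nonneg fun k _ => hA_nn k
  -- the off diagonal sum T
  set T : ℝ := ∑ i, ∑ j ∈ Finset.univ.erase i, a i j * H i j with hTdef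
  have hasymm : ∀ i j, a i j = a j i := by
    intro i j
    simp only [hadef, amat, eq_comm (a := i) (b := j)]
    ring_nf
  have hTswap : T = ∑ i, ∑ j ∈ Finset.univ.erase i, a i j * H j i := by
    rw [hTdef]
    rw [Finset.sum_comm' (s := Finset.univ) (t := fun i => Finset.univ.erase i)
      (t' := Finset.univ) (s' := fun j => Finset.univ.erase j)
      (h := by intro i j; simp [Finset.mem_erase, eq_comm, and_comm, ne_comm])]
    refine Finset.sum_congr rfl fun j _ => Finset.sum_congr rfl fun i _ => ?_
    rw [hasymm i j]
  have hT2 : 2 * T ≤ ‖W‖ * (2 * ((n:ℝ) - 1)) * D := by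
    have : 2 * T = ∑ i, ∑ j ∈ Finset.univ.erase i, a i j * (H i j + H j i) := by
      rw [two_mul]
      nth_rewrite 2 [hTswap]
      rw [hTdef, ← Finset.sum_add_distrib]
      refine Finset.sum_congr rfl fun i _ => ?_
      rw [← Finset.sum_add_distrib]
      exact Finset.sum_congr rfl fun j _ => by ring
    rw [this]
    have step1 : ∑ i, ∑ j ∈ Finset.univ.erase i, a i j * (H i j + H j i)
        ≤ ∑ i, ∑ j ∈ Finset.univ.erase i, (‖W‖ * A i + ‖W‖ * A j) := by
      refine Finset.sum_le_sum fun i _ => Finset.sum_le_sum fun j hj => ?_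
      exact hAmain i j (Finset.ne_of_mem_erase hj).symm
    refine step1.trans (le_of_eq ?_)
    have hcard : ∀ i : Fin n, (Finset.univ.erase i).card = n - 1 := by
      intro i
      rw [Finset.card_erase_of_mem (Finset.mem_univ i), Finset.card_univ, Fintype.card_fin]
    have herase : ∀ i : Fin n, ∑ j ∈ Finset.univ.erase i, A j = D - A i := by
      intro i
      rw [hDdef, ← Finset.add_sum_erase _ _ (Finset.mem_univ i)]
      ring
    have hn1 : (1:ℝ) ≤ (n:ℝ) := by exact_mod_cast Nat.one_le_of_lt hn
    calc ∑ i, ∑ j ∈ Finset.univ.erase i, (‖W‖ * A i + ‖W‖ * A j)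
        = ∑ i, (((n:ℝ) - 1) * (‖W‖ * A i) + ‖W‖ * (D - A i)) := by
          refine Finset.sum_congr rfl fun i _ => ?_
          rw [Finset.sum_add_distrib, Finset.sum_const, hcard i, ← Finset.mul_sum, herase i,
            nsmul_eq_mul]
          have : ((n - 1 : ℕ) : ℝ) = (n:ℝ) - 1 := by
            have : 1 ≤ n := Nat.one_le_of_lt hn
            push_cast [this]; ring
          rw [this]
      _ = ((n:ℝ) - 1) * (‖W‖ * D) + (n:ℝ) * (‖W‖ * D) - ‖W‖ * D := by
          simp only [mul_sub, Finset.sum_add_distrib, Finset.sum_sub_distrib,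
            ← Finset.mul_sum, Finset.sum_const, Finset.card_univ, Fintype.card_fin,
            nsmul_eq_mul, ← hDdef]
          ring
      _ = ‖W‖ * (2 * ((n:ℝ) - 1)) * D := by ring
  have hT : T ≤ ((n:ℝ) - 1) * ‖W‖ * D := by nlinarith [hT2]
  -- assemble
  have hgoal0 : ∑ i, ∑ j, a i j * H i j = (∑ i, a i i * H i i) + T := by
    rw [hsplit (fun i j => a i j * H i j)]
  have hSD : ∑ i, a i i * H i i = -D := by
    have h1 : ∑ i, a i i * H i i = ∑ i, -(A i) :=
      Finset.sum_congr rfl fun i _ => by simp only [hAdef]; ring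
    rw [h1, Finset.sum_neg_distrib, hDdef]
  have hfinal : T ≤ 1.1 * ((n:ℝ) - 1) * ‖W‖ * D := by
    have hn1 : (0:ℝ) ≤ (n:ℝ) - 1 := by
      have : 1 ≤ n := Nat.one_le_of_lt hn
      have := Nat.one_le_cast (α := ℝ) |>.2 this
      linarith
    nlinarith [mul_nonneg (mul_nonneg hn1 hWnn) hD_nn]
  calc ∑ i, ∑ j, a i j * H i j = (∑ i, a i i * H i i) + T := hgoal0
    _ ≤ (∑ i, a i i * H i i) + 1.1 * ((n:ℝ) - 1) * ‖W‖ * D := by linarith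
    _ = (1 - 1.1 * ((n : ℝ) - 1) * ‖W‖) * ∑ i, a i i * H i i := by
        rw [hSD]; ring
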